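/- Let f_0, g_0 ∈ C[z] be nonzero polynomials of equal length with nonzero constant coefficients, generate f_n, g_n by the Rudin-Shapiro-like recursion f_{n+1} = f_n + σ_n z^{len f_n} f_n†(-z), g_{n+1} = g_n + σ_n z^{len g_n} g_n†(-z). Then lim_{n→∞} ‖f_n g_n‖_2^2/(‖f_n‖_2^2‖g_n‖_2^2) = [2‖f_0 g_0‖_2^2 + ‖f_0 g_0~‖_2^2 + Re ∫ f_0 f_0~ conj(g_0 g_0~)] / (3‖f_0‖_2^2‖g_0‖_2^2). -/

import Mathlib

open Polynomial ComplexConjugate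

noncomputable def dagger (f : Polynomial ℂ) : Polynomial ℂ :=
  ∑ j ∈ Finset.range (f.natDegree + 1),
    Polynomial.C ((starRingEnd ℂ) (f.coeff (f.natDegree - j))) * Polynomial.X ^ j

noncomputable def circ (θ : ℝ) : ℂ := Complex.exp (θ * Complex.I)

noncomputable def n2 (f : Polynomial ℂ) : ℝ :=
  (1 / (2 * Real.pi)) * ∫ θ in (0:ℝ)..(2 * Real.pi), ‖f.eval (circ θ)‖ ^ 2

noncomputable def uu (f g : Polynomial ℂ) : ℝ :=
  (1 / (2 * Real.pi)) * ∫ θ in (0:ℝ)..(2 * Real.pi), ‖f.eval (circ θ) * g.eval (circ θ)‖ ^ 2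

noncomputable def vv (f g : Polynomial ℂ) : ℝ :=
  (1 / (2 * Real.pi)) * ∫ θ in (0:ℝ)..(2 * Real.pi), ‖f.eval (circ θ) * g.eval (-(circ θ))‖ ^ 2

noncomputable def ww (f g : Polynomial ℂ) : ℝ :=
  (1 / (2 * Real.pi)) * (∫ θ in (0:ℝ)..(2 * Real.pi),
    f.eval (circ θ) * f.eval (-(circ θ)) *
      (starRingEnd ℂ) (g.eval (circ θ) * g.eval (-(circ θ)))).re

/-- `p(-X)`. -/
noncomputable def NN (p : Polynomial ℂ) : Polynomial ℂ := p.comp (-Polynomial.X)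

/-- coefficientwise hermitian inner product -/
noncomputable def cs (p q : Polynomial ℂ) : ℂ := ∑' k : ℕ, p.coeff k * conj (q.coeff k)

lemma cs_summable (p q : Polynomial ℂ) :
    Summable (fun k => p.coeff k * conj (q.coeff k)) := by
  apply summable_of_ne_finset_zero (s := Finset.range (p.natDegree + 1))
  intro k hk
  rw [Polynomial.coeff_eq_zero_of_natDegree_lt, zero_mul]
  simpa [Nat.lt_succ_iff, Nat.succ_le_iff] using hk

lemma cs_eq_sum {p : Polynomial ℂ} (q : Polynomial ℂ) {B : ℕ} (hB : p.natDegree < B) :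
    cs p q = ∑ k ∈ Finset.range B, p.coeff k * conj (q.coeff k) := by
  apply tsum_eq_sum
  intro k hk
  rw [Polynomial.coeff_eq_zero_of_natDegree_lt, zero_mul]
  exact lt_of_lt_of_le hB (by simpa using hk)

lemma cs_congr {a a' b b' : Polynomial ℂ} (h1 : a = a') (h2 : b = b') :
    cs a b = cs a' b' := by rw [h1, h2]

lemma cs_conj (p q : Polynomial ℂ) : cs p q = conj (cs q p) := by
  have hB : q.natDegree < max p.natDegree q.natDegree + 1 := by omega
  have hB' : p.natDegree < max p.natDegree q.natDegree + 1 := by omega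
  rw [cs_eq_sum q hB', cs_eq_sum p hB, map_sum]
  apply Finset.sum_congr rfl
  intro k _
  simp [mul_comm]

lemma cs_add_left (a b c : Polynomial ℂ) : cs (a + b) c = cs a c + cs b c := by
  unfold cs
  rw [← Summable.tsum_add (cs_summable a c) (cs_summable b c)]
  apply tsum_congr; intro k
  simp [add_mul]

lemma cs_add_right (a b c : Polynomial ℂ) : cs a (b + c) = cs a b + cs a c := by
  unfold cs
  rw [← Summable.tsum_add (cs_summable a b) (cs_summable a c)]
  apply tsum_congr; intro k
  simp [mul_add]

lemma cs_C_mul_left (c : ℂ) (a b : Polynomial ℂ) : cs (C c * a) b = c * cs a b := by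
  unfold cs
  rw [← tsum_mul_left]
  apply tsum_congr; intro k
  simp [mul_assoc]

lemma cs_C_mul_right (c : ℂ) (a b : Polynomial ℂ) : cs a (C c * b) = conj c * cs a b := by
  unfold cs
  rw [← tsum_mul_left]
  apply tsum_congr; intro k
  ring_nf
  simp [Polynomial.coeff_C_mul]
  ring

lemma cs_zero_of_forall {p q : Polynomial ℂ} (h : ∀ k, p.coeff k * conj (q.coeff k) = 0) :
    cs p q = 0 := by
  unfold cs
  simp [h]

lemma cs_monomial_right (p : Polynomial ℂ) (M : ℕ) (e : ℂ) :
    cs p (monomial M e) = p.coeff M * conj e := by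
  unfold cs
  rw [tsum_eq_single M]
  · simp
  · intro k hk
    simp [Polynomial.coeff_monomial, Ne.symm hk]

lemma cs_monomial_left (M : ℕ) (c : ℂ) (q : Polynomial ℂ) :
    cs (monomial M c) q = c * conj (q.coeff M) := by
  unfold cs
  rw [tsum_eq_single M]
  · simp
  · intro k hk
    simp [Polynomial.coeff_monomial, Ne.symm hk]

lemma cs_shift (m : ℕ) (a b : Polynomial ℂ) : cs (X ^ m * a) (X ^ m * b) = cs a b := by
  have hB : a.natDegree < a.natDegree + 1 := Nat.lt_succ_self _
  have hL : (X ^ m * a).natDegree < m + (a.natDegree + 1) := by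
    calc (X ^ m * a).natDegree ≤ (X ^ m : Polynomial ℂ).natDegree + a.natDegree :=
          Polynomial.natDegree_mul_le
    _ ≤ m + a.natDegree := by simp [Polynomial.natDegree_X_pow]
    _ < m + (a.natDegree + 1) := by omega
  rw [cs_eq_sum b hB, cs_eq_sum (X ^ m * b) hL, Finset.sum_range_add]
  have h1 : ∀ k ∈ Finset.range m,
      (X ^ m * a).coeff k * conj ((X ^ m * b).coeff k) = 0 := by
    intro k hk
    rw [mul_comm (X ^ m) a, Polynomial.coeff_mul_X_pow', if_neg (by simpa using hk), zero_mul]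
  rw [Finset.sum_eq_zero h1, zero_add]
  apply Finset.sum_congr rfl
  intro k _
  rw [add_comm m k, Polynomial.coeff_X_pow_mul, Polynomial.coeff_X_pow_mul]

lemma cs_zero_right {a : Polynomial ℂ} {m : ℕ} (h : a.natDegree < m) (b : Polynomial ℂ) :
    cs a (X ^ m * b) = 0 := by
  apply cs_zero_of_forall
  intro k
  rcases lt_or_ge k m with hk | hk
  · rw [mul_comm (X ^ m) b, Polynomial.coeff_mul_X_pow', if_neg (by omega)]
    simp
  · rw [Polynomial.coeff_eq_zero_of_natDegree_lt (lt_of_lt_of_le h hk), zero_mul]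

lemma cs_zero_left {a : Polynomial ℂ} {m : ℕ} (h : a.natDegree < m) (b : Polynomial ℂ) :
    cs (X ^ m * b) a = 0 := by
  rw [cs_conj, cs_zero_right h, map_zero]

-- NN lemmas
lemma NN_coeff (p : Polynomial ℂ) (k : ℕ) : (NN p).coeff k = (-1) ^ k * p.coeff k := by
  induction p using Polynomial.induction_on' with
  | add p q hp hq => simp [NN, Polynomial.add_comp] at hp hq ⊢; rw [hp, hq]; ring
  | monomial n a =>
    have h1 : NN (monomial n a) = C ((-1)^n * a) * X ^ n := by
      rw [NN, Polynomial.monomial_comp, neg_pow]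
      rw [show ((-1 : Polynomial ℂ)) = C (-1 : ℂ) by simp]
      rw [← map_pow, ← mul_assoc, mul_comm (C a), ← map_mul]
    rw [h1, Polynomial.coeff_C_mul, Polynomial.coeff_X_pow, Polynomial.coeff_monomial]
    by_cases h : n = k
    · subst h; simp
    · simp [h, Ne.symm h]

lemma NN_mul (p q : Polynomial ℂ) : NN (p * q) = NN p * NN q := by
  simp [NN, Polynomial.mul_comp]

lemma NN_add (p q : Polynomial ℂ) : NN (p + q) = NN p + NN q := by
  simp [NN, Polynomial.add_comp]

lemma NN_NN (p : Polynomial ℂ) : NN (NN p) = p := by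
  rw [NN, NN, Polynomial.comp_assoc]
  simp [Polynomial.neg_comp, Polynomial.X_comp]

lemma NN_X_pow (n : ℕ) : NN (X ^ n : Polynomial ℂ) = C ((-1)^n) * X ^ n := by
  rw [NN, Polynomial.X_pow_comp, neg_pow]
  simp [map_pow]

lemma NN_C_mul (c : ℂ) (p : Polynomial ℂ) : NN (C c * p) = C c * NN p := by
  simp [NN, Polynomial.mul_comp]

lemma cs_NN (a b : Polynomial ℂ) : cs (NN a) (NN b) = cs a b := by
  unfold cs
  apply tsum_congr; intro k
  rw [NN_coeff, NN_coeff, map_mul]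
  have : conj ((-1 : ℂ) ^ k) = (-1 : ℂ)^k := by
    rw [map_pow]; simp
  rw [this]
  have h2 : ((-1:ℂ)^k) * ((-1:ℂ)^k) = 1 := by
    rw [← pow_add, ← two_mul, pow_mul]; norm_num
  linear_combination (a.coeff k * conj (b.coeff k)) * h2

lemma cs_flip (a b : Polynomial ℂ) : cs a b = cs (NN a) (NN b) := (cs_NN a b).symm

-- dagger lemmas
lemma dagger_coeff (p : Polynomial ℂ) (k : ℕ) :
    (dagger p).coeff k = if k ≤ p.natDegree then conj (p.coeff (p.natDegree - k)) else 0 := by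
  unfold dagger
  rw [Polynomial.finset_sum_coeff]
  have : ∀ j ∈ Finset.range (p.natDegree + 1),
      (C (conj (p.coeff (p.natDegree - j))) * X ^ j).coeff k
      = if j = k then conj (p.coeff (p.natDegree - j)) else 0 := by
    intro j _
    rw [Polynomial.coeff_C_mul, Polynomial.coeff_X_pow]
    by_cases h : j = k
    · subst h; simp
    · simp [Polynomial.coeff_X_pow, h, Ne.symm h]
  rw [Finset.sum_congr rfl this, Finset.sum_ite_eq']
  simp [Nat.lt_succ_iff]

lemma dagger_natDegree_le (p : Polynomial ℂ) : (dagger p).natDegree ≤ p.natDegree := by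
  apply Polynomial.natDegree_le_iff_coeff_eq_zero.2
  intro k hk
  rw [dagger_coeff, if_neg (by omega)]

/-- The key move: on the circle, `conj((dagger p)(z)) = z^{-deg p} p(z)`. -/
lemma csE (p : Polynomial ℂ) (m : ℕ) (a b : Polynomial ℂ) :
    cs a (X ^ m * (dagger p * b)) = cs (a * p) (X ^ (m + p.natDegree) * b) := by
  induction a using Polynomial.induction_on' with
  | add u v hu hv => rw [cs_add_left, hu, hv, add_mul, cs_add_left]
  | monomial α c =>
    induction b using Polynomial.induction_on' with
    | add u v hu hv =>
      rw [show X^m * (dagger p * (u + v)) = X^m * (dagger p * u) + X^m * (dagger p * v) by ring,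
          cs_add_right, hu, hv,
          show X^(m+p.natDegree) * (u+v) = X^(m+p.natDegree)*u + X^(m+p.natDegree)*v by ring,
          ← cs_add_right]
    | monomial β e =>
      rw [cs_monomial_left]
      rw [show X^m * (dagger p * monomial β e) = C e * (X^(m+β) * dagger p) by
        rw [← Polynomial.C_mul_X_pow_eq_monomial]; ring]
      rw [show X^(m+p.natDegree) * monomial β e = monomial (m + p.natDegree + β) e by
        rw [← Polynomial.C_mul_X_pow_eq_monomial, ← Polynomial.C_mul_X_pow_eq_monomial]; ring]
      rw [cs_monomial_right]
      rw [show monomial α c * p = C c * (p * X^α) by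
        rw [← Polynomial.C_mul_X_pow_eq_monomial]; ring]
      rw [Polynomial.coeff_C_mul, Polynomial.coeff_C_mul,
          mul_comm (X^(m+β)) (dagger p), Polynomial.coeff_mul_X_pow',
          Polynomial.coeff_mul_X_pow']
      set d := p.natDegree with hd
      by_cases h1 : m + β ≤ α
      · rw [if_pos h1, dagger_coeff]
        by_cases h2 : α - (m+β) ≤ d
        · rw [if_pos h2, if_pos (by omega : α ≤ m + d + β)]
          rw [show d - (α - (m+β)) = m + d + β - α by omega]
          simp only [map_mul, Complex.conj_conj]
          ring
        · rw [if_neg h2, if_neg (by omega : ¬ α ≤ m + d + β)]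
          simp
      · rw [if_neg h1, if_pos (by omega : α ≤ m + d + β)]
        rw [Polynomial.coeff_eq_zero_of_natDegree_lt (by omega : d < m + d + β - α)]
        simp

lemma csE' (p : Polynomial ℂ) (m : ℕ) (a b : Polynomial ℂ) :
    cs (X ^ m * (dagger p * b)) a = cs (X ^ (m + p.natDegree) * b) (a * p) := by
  rw [cs_conj, csE, ← cs_conj]

lemma csE2 (p : Polynomial ℂ) (m : ℕ) (a b : Polynomial ℂ) :
    cs (a * dagger p) (X ^ m * (dagger p * b)) = cs (a * p) (X ^ m * (b * p)) := by
  rw [csE]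
  calc cs (a * dagger p * p) (X ^ (m + p.natDegree) * b)
      = cs (X ^ 0 * (dagger p * (a * p))) (X ^ (m + p.natDegree) * b) :=
        cs_congr (by ring) rfl
    _ = cs (X ^ (0 + p.natDegree) * (a * p)) ((X ^ (m + p.natDegree) * b) * p) := csE' _ _ _ _
    _ = cs (X ^ p.natDegree * (a * p)) (X ^ p.natDegree * (X ^ m * (b * p))) :=
        cs_congr (by ring) (by ring)
    _ = cs (a * p) (X ^ m * (b * p)) := cs_shift _ _ _

lemma cs_flip' {a b a' b' : Polynomial ℂ} (h1 : NN a = a') (h2 : NN b = b') :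
    cs a b = cs a' b' := by rw [← h1, ← h2]; exact (cs_NN a b).symm

lemma conj_neg_one_pow (n : ℕ) : conj ((-1:ℂ)^n) = (-1:ℂ)^n := by
  rw [map_pow]; simp

lemma cs_self_conj (a : Polynomial ℂ) : conj (cs a a) = cs a a := (cs_conj a a).symm

-- H1
lemma veq (A B : Polynomial ℂ) : cs (B * NN A) (B * NN A) = cs (A * NN B) (A * NN B) :=
  cs_flip' (by rw [NN_mul, NN_NN]; try ring) (by rw [NN_mul, NN_NN]; try ring)

-- H2
lemma diag_dag (A B : Polynomial ℂ) : cs (A * dagger B) (A * dagger B) = cs (A * B) (A * B) := by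
  calc cs (A * dagger B) (A * dagger B)
      = cs (A * dagger B) (X ^ 0 * (dagger B * A)) := cs_congr rfl (by ring)
    _ = cs (A * B) (X ^ 0 * (A * B)) := csE2 _ _ _ _
    _ = cs (A * B) (A * B) := cs_congr rfl (by ring)

-- H3
lemma diag1 (A B : Polynomial ℂ) :
    cs (A * NN (dagger B)) (A * NN (dagger B)) = cs (A * NN B) (A * NN B) := by
  calc cs (A * NN (dagger B)) (A * NN (dagger B))
      = cs (NN A * dagger B) (NN A * dagger B) :=
        cs_flip' (by rw [NN_mul, NN_NN]) (by rw [NN_mul, NN_NN])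
    _ = cs (NN A * B) (NN A * B) := diag_dag _ _
    _ = cs (A * NN B) (A * NN B) :=
        cs_flip' (by rw [NN_mul, NN_NN]) (by rw [NN_mul, NN_NN])

-- H4
lemma diag2 (A B : Polynomial ℂ) :
    cs (NN (dagger A) * dagger B) (NN (dagger A) * dagger B) = cs (A * NN B) (A * NN B) := by
  calc cs (NN (dagger A) * dagger B) (NN (dagger A) * dagger B)
      = cs (NN (dagger B) * dagger A) (X ^ 0 * (dagger A * NN (dagger B))) :=
        cs_flip' (by rw [NN_mul, NN_NN]; try ring) (by rw [NN_mul, NN_NN]; try ring)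
    _ = cs (NN (dagger B) * A) (X ^ 0 * (NN (dagger B) * A)) := csE2 _ _ _ _
    _ = cs (A * NN (dagger B)) (A * NN (dagger B)) := cs_congr (by ring) (by ring)
    _ = cs (A * NN B) (A * NN B) := diag1 _ _

-- H5
lemma diag3 (A B : Polynomial ℂ) :
    cs (NN (dagger A) * NN (dagger B)) (NN (dagger A) * NN (dagger B)) = cs (A * B) (A * B) := by
  calc cs (NN (dagger A) * NN (dagger B)) (NN (dagger A) * NN (dagger B))
      = cs (dagger A * dagger B) (X ^ 0 * (dagger B * dagger A)) :=
        cs_flip' (by rw [NN_mul, NN_NN, NN_NN]) (by rw [NN_mul, NN_NN, NN_NN]; try ring)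
    _ = cs (dagger A * B) (X ^ 0 * (dagger A * B)) := csE2 _ _ _ _
    _ = cs (B * dagger A) (B * dagger A) := cs_congr (by ring) (by ring)
    _ = cs (B * A) (B * A) := diag_dag _ _
    _ = cs (A * B) (A * B) := cs_congr (by ring) (by ring)

lemma cs_flip_sgn {a b a' b' : Polynomial ℂ} {n : ℕ} (h1 : NN a = a')
    (h2 : NN b = C ((-1:ℂ)^n) * b') : cs a b = (-1:ℂ)^n * cs a' b' := by
  rw [cs_flip' h1 h2, cs_C_mul_right, conj_neg_one_pow]

lemma neg_one_pow_succ (n : ℕ) : ((-1:ℂ))^(n+1) = -((-1:ℂ)^n) := by rw [pow_succ]; ring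

lemma neg_one_pow_odd (d : ℕ) : ((-1:ℂ))^(2*d+1) = -1 := by
  rw [pow_succ, pow_mul]; norm_num

lemma neg_one_pow_self_mul (n : ℕ) : ((-1:ℂ))^n * ((-1:ℂ))^n = 1 := by
  rw [← pow_add, ← two_mul, pow_mul]; norm_num

-- H6
lemma crossW (A B : Polynomial ℂ) (d : ℕ) (hA : A.natDegree = d) (hB : B.natDegree = d) :
    cs (A * NN (dagger B)) (B * NN (dagger A)) = cs (A * NN A) (B * NN B) := by
  calc cs (A * NN (dagger B)) (B * NN (dagger A))
      = cs (NN A * dagger B) (X ^ 0 * (dagger A * NN B)) :=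
        cs_flip' (by rw [NN_mul, NN_NN]) (by rw [NN_mul, NN_NN]; try ring)
    _ = cs (NN A * dagger B * A) (X ^ (0 + A.natDegree) * NN B) := csE _ _ _ _
    _ = cs (X ^ 0 * (dagger B * (NN A * A))) (X ^ d * NN B) := by
        rw [hA]; exact cs_congr (by ring) (by ring)
    _ = cs (X ^ (0 + B.natDegree) * (NN A * A)) ((X ^ d * NN B) * B) := csE' _ _ _ _
    _ = cs (X ^ d * (NN A * A)) (X ^ d * (NN B * B)) := by
        rw [hB]; exact cs_congr (by ring) (by ring)
    _ = cs (NN A * A) (NN B * B) := cs_shift _ _ _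
    _ = cs (A * NN A) (B * NN B) :=
        cs_flip' (by rw [NN_mul, NN_NN]; try ring) (by rw [NN_mul, NN_NN]; try ring)

-- H9
lemma diag_aa (A B : Polynomial ℂ) (d : ℕ) (hA : A.natDegree = d) (hB : B.natDegree = d) :
    cs (A * dagger A) (B * dagger B) = cs (A * B) (A * B) := by
  calc cs (A * dagger A) (B * dagger B)
      = cs (A * dagger A) (X ^ 0 * (dagger B * B)) := cs_congr rfl (by ring)
    _ = cs (A * dagger A * B) (X ^ (0 + B.natDegree) * B) := csE _ _ _ _
    _ = cs (X ^ 0 * (dagger A * (A * B))) (X ^ d * B) := by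
        rw [hB]; exact cs_congr (by ring) (by ring)
    _ = cs (X ^ (0 + A.natDegree) * (A * B)) ((X ^ d * B) * A) := csE' _ _ _ _
    _ = cs (X ^ d * (A * B)) (X ^ d * (A * B)) := by
        rw [hA]; exact cs_congr (by ring) (by ring)
    _ = cs (A * B) (A * B) := cs_shift _ _ _

-- H10
lemma diag_bb (A B : Polynomial ℂ) (d : ℕ) (hA : A.natDegree = d) (hB : B.natDegree = d) :
    cs (NN (dagger A) * NN A) (NN (dagger B) * NN B) = cs (A * B) (A * B) := by
  calc cs (NN (dagger A) * NN A) (NN (dagger B) * NN B)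
      = cs (A * dagger A) (B * dagger B) :=
        cs_flip' (by rw [NN_mul, NN_NN, NN_NN]; try ring) (by rw [NN_mul, NN_NN, NN_NN]; try ring)
    _ = cs (A * B) (A * B) := diag_aa A B d hA hB

-- H7
lemma crossc1 (A B : Polynomial ℂ) (d : ℕ) (hA : A.natDegree = d) (hB : B.natDegree = d) :
    cs (A * dagger B) (NN (dagger A) * NN B) = (-1:ℂ)^d * cs (A * NN A) (B * NN B) := by
  calc cs (A * dagger B) (NN (dagger A) * NN B)
      = cs (NN A * NN (dagger B)) (X ^ 0 * (dagger A * B)) :=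
        cs_flip' (by rw [NN_mul]) (by rw [NN_mul, NN_NN, NN_NN]; try ring)
    _ = cs (NN A * NN (dagger B) * A) (X ^ (0 + A.natDegree) * B) := csE _ _ _ _
    _ = cs (NN A * NN (dagger B) * A) (X ^ d * B) := by
        rw [hA]; exact cs_congr rfl (by ring)
    _ = (-1:ℂ)^d * cs (A * dagger B * NN A) (X ^ d * NN B) :=
        cs_flip_sgn (by rw [NN_mul, NN_mul, NN_NN, NN_NN]; try ring) (by rw [NN_mul, NN_X_pow]; try ring)
    _ = (-1:ℂ)^d * cs (X ^ 0 * (dagger B * (A * NN A))) (X ^ d * NN B) :=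
        congrArg ((-1:ℂ)^d * ·) (cs_congr (by ring) rfl)
    _ = (-1:ℂ)^d * cs (X ^ (0 + B.natDegree) * (A * NN A)) ((X ^ d * NN B) * B) := by rw [csE']
    _ = (-1:ℂ)^d * cs (X ^ d * (A * NN A)) (X ^ d * (B * NN B)) := by
        rw [hB]; exact congrArg ((-1:ℂ)^d * ·) (cs_congr (by ring) (by ring))
    _ = (-1:ℂ)^d * cs (A * NN A) (B * NN B) := by rw [cs_shift]

-- H8
lemma crossc2 (A B : Polynomial ℂ) (d : ℕ) (hA : A.natDegree = d) (hB : B.natDegree = d) :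
    cs (A * dagger A) (NN (dagger B) * NN B) = (-1:ℂ)^d * cs (A * NN B) (A * NN B) := by
  calc cs (A * dagger A) (NN (dagger B) * NN B)
      = cs (NN A * NN (dagger A)) (X ^ 0 * (dagger B * B)) :=
        cs_flip' (by rw [NN_mul]) (by rw [NN_mul, NN_NN, NN_NN]; try ring)
    _ = cs (NN A * NN (dagger A) * B) (X ^ (0 + B.natDegree) * B) := csE _ _ _ _
    _ = cs (NN A * NN (dagger A) * B) (X ^ d * B) := by
        rw [hB]; exact cs_congr rfl (by ring)
    _ = (-1:ℂ)^d * cs (A * dagger A * NN B) (X ^ d * NN B) :=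
        cs_flip_sgn (by rw [NN_mul, NN_mul, NN_NN, NN_NN]; try ring) (by rw [NN_mul, NN_X_pow]; try ring)
    _ = (-1:ℂ)^d * cs (X ^ 0 * (dagger A * (A * NN B))) (X ^ d * NN B) :=
        congrArg ((-1:ℂ)^d * ·) (cs_congr (by ring) rfl)
    _ = (-1:ℂ)^d * cs (X ^ (0 + A.natDegree) * (A * NN B)) ((X ^ d * NN B) * A) := by rw [csE']
    _ = (-1:ℂ)^d * cs (X ^ d * (A * NN B)) (X ^ d * (A * NN B)) := by
        rw [hA]; exact congrArg ((-1:ℂ)^d * ·) (cs_congr (by ring) (by ring))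
    _ = (-1:ℂ)^d * cs (A * NN B) (A * NN B) := by rw [cs_shift]

-- H11
lemma zzW (A B : Polynomial ℂ) (d : ℕ) (hA : A.natDegree = d) (hB : B.natDegree = d) :
    cs (NN (dagger A) * dagger A) (NN (dagger B) * dagger B)
      = conj (cs (A * NN A) (B * NN B)) := by
  calc cs (NN (dagger A) * dagger A) (NN (dagger B) * dagger B)
      = cs (dagger A * NN (dagger A)) (X ^ 0 * (dagger B * NN (dagger B))) :=
        cs_flip' (by rw [NN_mul, NN_NN]; try ring) (by rw [NN_mul, NN_NN]; try ring)
    _ = cs (dagger A * NN (dagger A) * B) (X ^ (0 + B.natDegree) * NN (dagger B)) := csE _ _ _ _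
    _ = cs (X ^ 0 * (dagger A * (NN (dagger A) * B))) (X ^ d * NN (dagger B)) := by
        rw [hB]; exact cs_congr (by ring) (by ring)
    _ = cs (X ^ (0 + A.natDegree) * (NN (dagger A) * B)) ((X ^ d * NN (dagger B)) * A) := csE' _ _ _ _
    _ = cs (X ^ d * (NN (dagger A) * B)) (X ^ d * (NN (dagger B) * A)) := by
        rw [hA]; exact cs_congr (by ring) (by ring)
    _ = cs (NN (dagger A) * B) (NN (dagger B) * A) := cs_shift _ _ _
    _ = cs (dagger A * NN B) (X ^ 0 * (dagger B * NN A)) :=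
        cs_flip' (by rw [NN_mul, NN_NN]) (by rw [NN_mul, NN_NN]; try ring)
    _ = cs (dagger A * NN B * B) (X ^ (0 + B.natDegree) * NN A) := csE _ _ _ _
    _ = cs (X ^ 0 * (dagger A * (NN B * B))) (X ^ d * NN A) := by
        rw [hB]; exact cs_congr (by ring) (by ring)
    _ = cs (X ^ (0 + A.natDegree) * (NN B * B)) ((X ^ d * NN A) * A) := csE' _ _ _ _
    _ = cs (X ^ d * (NN B * B)) (X ^ d * (NN A * A)) := by
        rw [hA]; exact cs_congr (by ring) (by ring)
    _ = cs (NN B * B) (NN A * A) := cs_shift _ _ _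
    _ = cs (B * NN B) (A * NN A) :=
        cs_flip' (by rw [NN_mul, NN_NN]; try ring) (by rw [NN_mul, NN_NN]; try ring)
    _ = conj (cs (A * NN A) (B * NN B)) := cs_conj _ _

lemma neg_one_merge (d : ℕ) : ((-1:ℂ))^(d+1) * ((-1:ℂ))^(2*d+1) = ((-1:ℂ))^d := by
  rw [← pow_add, show d+1+(2*d+1) = d + 2*(d+1) by ring, pow_add, pow_mul]
  norm_num

-- H12 : cancellation for the uu recursion
lemma cancel_u (A B : Polynomial ℂ) (d : ℕ) (hA : A.natDegree = d) (hB : B.natDegree = d) :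
    cs (A*B) (X^(d+1) * (B * NN (dagger A)))
      + cs (A * NN (dagger B)) (X^(d+1) * (NN (dagger A) * NN (dagger B))) = 0 := by
  have e1 : cs (A*B) (X^(d+1) * (B * NN (dagger A)))
      = (-1:ℂ)^d * cs (A*B*NN A) (X^(2*d+1) * B) := by
    calc cs (A*B) (X^(d+1) * (B * NN (dagger A)))
        = (-1:ℂ)^(d+1) * cs (NN A * NN B) (X^(d+1) * (dagger A * NN B)) :=
          cs_flip_sgn (by rw [NN_mul]) (by rw [NN_mul, NN_mul, NN_X_pow, NN_NN]; try ring)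
      _ = (-1:ℂ)^(d+1) * cs (NN A * NN B * A) (X^(d+1+A.natDegree) * NN B) := by rw [csE]
      _ = (-1:ℂ)^(d+1) * ((-1:ℂ)^(2*d+1) * cs (A*B*NN A) (X^(2*d+1) * B)) := by
          rw [hA, show d+1+d = 2*d+1 by ring]
          exact congrArg ((-1:ℂ)^(d+1) * ·)
            (cs_flip_sgn (by rw [NN_mul, NN_mul, NN_NN, NN_NN]; try ring)
              (by rw [NN_mul, NN_X_pow, NN_NN]; try ring))
      _ = (-1:ℂ)^d * cs (A*B*NN A) (X^(2*d+1) * B) := by rw [← mul_assoc, neg_one_merge]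
  have e2 : cs (A * NN (dagger B)) (X^(d+1) * (NN (dagger A) * NN (dagger B)))
      = (-1:ℂ)^(d+1) * cs (A*B*NN A) (X^(2*d+1) * B) := by
    calc cs (A * NN (dagger B)) (X^(d+1) * (NN (dagger A) * NN (dagger B)))
        = (-1:ℂ)^(d+1) * cs (NN A * dagger B) (X^(d+1) * (dagger A * dagger B)) :=
          cs_flip_sgn (by rw [NN_mul, NN_NN]) (by rw [NN_mul, NN_mul, NN_X_pow, NN_NN, NN_NN]; try ring)
      _ = (-1:ℂ)^(d+1) * cs (NN A * dagger B * A) (X^(d+1+A.natDegree) * dagger B) := by rw [csE]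
      _ = (-1:ℂ)^(d+1) * cs ((NN A * A) * dagger B) (X^(2*d+1) * (dagger B * 1)) := by
          rw [hA, show d+1+d = 2*d+1 by ring]
          exact congrArg ((-1:ℂ)^(d+1) * ·) (cs_congr (by ring) (by ring))
      _ = (-1:ℂ)^(d+1) * cs ((NN A * A) * B) (X^(2*d+1) * (1 * B)) := by rw [csE2]
      _ = (-1:ℂ)^(d+1) * cs (A*B*NN A) (X^(2*d+1) * B) :=
          congrArg ((-1:ℂ)^(d+1) * ·) (cs_congr (by ring) (by ring))
  rw [e1, e2, neg_one_pow_succ]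
  ring

-- H13
lemma cancel_v1 (A B : Polynomial ℂ) (d : ℕ) (hA : A.natDegree = d) (hB : B.natDegree = d) :
    cs (A * dagger B) (X^(d+1) * (NN (dagger A) * dagger B))
      + cs (A * NN B) (X^(d+1) * (NN (dagger A) * NN B)) = 0 := by
  have e1 : cs (A * dagger B) (X^(d+1) * (NN (dagger A) * dagger B))
      = (-1:ℂ)^d * cs (A*B*NN A) (X^(2*d+1) * B) := by
    calc cs (A * dagger B) (X^(d+1) * (NN (dagger A) * dagger B))
        = cs (A * dagger B) (X^(d+1) * (dagger B * NN (dagger A))) := cs_congr rfl (by ring)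
      _ = cs (A * B) (X^(d+1) * (NN (dagger A) * B)) := csE2 _ _ _ _
      _ = (-1:ℂ)^(d+1) * cs (NN A * NN B) (X^(d+1) * (dagger A * NN B)) :=
          cs_flip_sgn (by rw [NN_mul]) (by rw [NN_mul, NN_mul, NN_X_pow, NN_NN]; try ring)
      _ = (-1:ℂ)^(d+1) * cs (NN A * NN B * A) (X^(d+1+A.natDegree) * NN B) := by rw [csE]
      _ = (-1:ℂ)^(d+1) * ((-1:ℂ)^(2*d+1) * cs (A*B*NN A) (X^(2*d+1) * B)) := by
          rw [hA, show d+1+d = 2*d+1 by ring]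
          exact congrArg ((-1:ℂ)^(d+1) * ·)
            (cs_flip_sgn (by rw [NN_mul, NN_mul, NN_NN, NN_NN]; try ring)
              (by rw [NN_mul, NN_X_pow, NN_NN]; try ring))
      _ = (-1:ℂ)^d * cs (A*B*NN A) (X^(2*d+1) * B) := by rw [← mul_assoc, neg_one_merge]
  have e2 : cs (A * NN B) (X^(d+1) * (NN (dagger A) * NN B))
      = (-1:ℂ)^(d+1) * cs (A*B*NN A) (X^(2*d+1) * B) := by
    calc cs (A * NN B) (X^(d+1) * (NN (dagger A) * NN B))
        = (-1:ℂ)^(d+1) * cs (NN A * B) (X^(d+1) * (dagger A * B)) :=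
          cs_flip_sgn (by rw [NN_mul, NN_NN]) (by rw [NN_mul, NN_mul, NN_X_pow, NN_NN, NN_NN]; try ring)
      _ = (-1:ℂ)^(d+1) * cs (NN A * B * A) (X^(d+1+A.natDegree) * B) := by rw [csE]
      _ = (-1:ℂ)^(d+1) * cs (A*B*NN A) (X^(2*d+1) * B) := by
          rw [hA, show d+1+d = 2*d+1 by ring]
          exact congrArg ((-1:ℂ)^(d+1) * ·) (cs_congr (by ring) rfl)
  rw [e1, e2, neg_one_pow_succ]
  ring

-- H14
lemma cancel_v2 (A B : Polynomial ℂ) (d : ℕ) (hA : A.natDegree = d) (hB : B.natDegree = d) :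
    cs (NN (dagger A) * NN B) (X^(d+1) * (NN (dagger A) * dagger B))
      + cs (A * NN B) (X^(d+1) * (A * dagger B)) = 0 := by
  have e2 : cs (A * NN B) (X^(d+1) * (A * dagger B))
      = cs (A * NN B * B) (X^(2*d+1) * A) := by
    calc cs (A * NN B) (X^(d+1) * (A * dagger B))
        = cs (A * NN B) (X^(d+1) * (dagger B * A)) := cs_congr rfl (by ring)
      _ = cs (A * NN B * B) (X^(d+1+B.natDegree) * A) := csE _ _ _ _
      _ = cs (A * NN B * B) (X^(2*d+1) * A) := by rw [hB, show d+1+d = 2*d+1 by ring]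
  have e1 : cs (NN (dagger A) * NN B) (X^(d+1) * (NN (dagger A) * dagger B))
      = -cs (A * NN B * B) (X^(2*d+1) * A) := by
    calc cs (NN (dagger A) * NN B) (X^(d+1) * (NN (dagger A) * dagger B))
        = (-1:ℂ)^(d+1) * cs (B * dagger A) (X^(d+1) * (dagger A * NN (dagger B))) :=
          cs_flip_sgn (by rw [NN_mul, NN_NN, NN_NN]; try ring)
            (by rw [NN_mul, NN_mul, NN_X_pow, NN_NN]; try ring)
      _ = (-1:ℂ)^(d+1) * cs (B * A) (X^(d+1) * (NN (dagger B) * A)) := by rw [csE2]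
      _ = (-1:ℂ)^(d+1) * ((-1:ℂ)^(d+1) * cs (NN B * NN A) (X^(d+1) * (dagger B * NN A))) :=
          congrArg ((-1:ℂ)^(d+1) * ·)
            (cs_flip_sgn (by rw [NN_mul]) (by rw [NN_mul, NN_mul, NN_X_pow, NN_NN]; try ring))
      _ = (-1:ℂ)^(d+1) * ((-1:ℂ)^(d+1) * cs (NN B * NN A * B) (X^(d+1+B.natDegree) * NN A)) := by
          rw [csE]
      _ = (-1:ℂ)^(d+1) * ((-1:ℂ)^(d+1) * ((-1:ℂ)^(2*d+1) * cs (A * NN B * B) (X^(2*d+1) * A))) := by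
          rw [hB, show d+1+d = 2*d+1 by ring]
          exact congrArg _ (congrArg _
            (cs_flip_sgn (by rw [NN_mul, NN_mul, NN_NN, NN_NN]; try ring)
              (by rw [NN_mul, NN_X_pow, NN_NN]; try ring)))
      _ = -cs (A * NN B * B) (X^(2*d+1) * A) := by
          rw [neg_one_pow_odd, ← mul_assoc, neg_one_pow_self_mul]
          ring
  rw [e1, e2]
  ring

-- HK2
lemma hk2 (A B : Polynomial ℂ) (d : ℕ) (hA : A.natDegree = d) (hB : B.natDegree = d) :
    cs (A * NN A) (X^(d+1) * (NN (dagger B) * NN B))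
      = (-1:ℂ)^(d+1) * cs (A * NN A) (X^(d+1) * (B * dagger B)) :=
  cs_flip_sgn (by rw [NN_mul, NN_NN]; try ring)
    (by rw [NN_mul, NN_mul, NN_X_pow, NN_NN, NN_NN]; try ring)

-- HK4
lemma hk4 (A B : Polynomial ℂ) (d : ℕ) (hA : A.natDegree = d) (hB : B.natDegree = d) :
    cs (NN (dagger B) * NN B) (X^(d+1) * (NN (dagger A) * dagger A))
      = (-1:ℂ)^(d+1) * cs (B * dagger B) (X^(d+1) * (NN (dagger A) * dagger A)) :=
  cs_flip_sgn (by rw [NN_mul, NN_NN, NN_NN]; try ring)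
    (by rw [NN_mul, NN_mul, NN_X_pow, NN_NN]; try ring)

-- HK3
lemma hk3 (A B : Polynomial ℂ) (d : ℕ) (hA : A.natDegree = d) (hB : B.natDegree = d) :
    cs (B * dagger B) (X^(d+1) * (NN (dagger A) * dagger A))
      = (-1:ℂ)^d * cs (A * NN A) (X^(d+1) * (B * dagger B)) := by
  have k1 : cs (A * NN A) (X^(d+1) * (B * dagger B))
      = cs (A * NN A * B) (X^(2*d+1) * B) := by
    calc cs (A * NN A) (X^(d+1) * (B * dagger B))
        = cs (A * NN A) (X^(d+1) * (dagger B * B)) := cs_congr rfl (by ring)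
      _ = cs (A * NN A * B) (X^(d+1+B.natDegree) * B) := csE _ _ _ _
      _ = cs (A * NN A * B) (X^(2*d+1) * B) := by rw [hB, show d+1+d = 2*d+1 by ring]
  have k3 : cs (B * dagger B) (X^(d+1) * (NN (dagger A) * dagger A))
      = (-1:ℂ)^(d+1) * (-(cs (A * NN A * B) (X^(2*d+1) * B))) := by
    calc cs (B * dagger B) (X^(d+1) * (NN (dagger A) * dagger A))
        = cs (B * dagger B) (X^(d+1) * (dagger A * NN (dagger A))) := cs_congr rfl (by ring)
      _ = cs (B * dagger B * A) (X^(d+1+A.natDegree) * NN (dagger A)) := csE _ _ _ _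
      _ = cs (X^0 * (dagger B * (B * A))) (X^(2*d+1) * NN (dagger A)) := by
          rw [hA, show d+1+d = 2*d+1 by ring]
          exact cs_congr (by ring) rfl
      _ = cs (X^(0+B.natDegree) * (B * A)) ((X^(2*d+1) * NN (dagger A)) * B) := csE' _ _ _ _
      _ = cs (X^d * (B * A)) (X^d * (X^(d+1) * (NN (dagger A) * B))) := by
          rw [hB]; exact cs_congr (by ring) (by ring)
      _ = cs (B * A) (X^(d+1) * (NN (dagger A) * B)) := cs_shift _ _ _
      _ = (-1:ℂ)^(d+1) * cs (NN B * NN A) (X^(d+1) * (dagger A * NN B)) :=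
          cs_flip_sgn (by rw [NN_mul]) (by rw [NN_mul, NN_mul, NN_X_pow, NN_NN]; try ring)
      _ = (-1:ℂ)^(d+1) * cs (NN B * NN A * A) (X^(d+1+A.natDegree) * NN B) := by rw [csE]
      _ = (-1:ℂ)^(d+1) * ((-1:ℂ)^(2*d+1) * cs (B * A * NN A) (X^(2*d+1) * B)) := by
          rw [hA, show d+1+d = 2*d+1 by ring]
          exact congrArg _
            (cs_flip_sgn (by rw [NN_mul, NN_mul, NN_NN, NN_NN]; try ring)
              (by rw [NN_mul, NN_X_pow, NN_NN]; try ring))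
      _ = (-1:ℂ)^(d+1) * (-(cs (A * NN A * B) (X^(2*d+1) * B))) := by
          rw [neg_one_pow_odd]
          exact congrArg _ (by rw [neg_one_mul]; exact congrArg _ (cs_congr (by ring) rfl))
  rw [k1, k3, neg_one_pow_succ]
  ring

lemma diag4 (A B : Polynomial ℂ) :
    cs (NN (dagger A) * NN B) (NN (dagger A) * NN B) = cs (A * B) (A * B) := by
  calc cs (NN (dagger A) * NN B) (NN (dagger A) * NN B)
      = cs (B * dagger A) (B * dagger A) :=
        cs_flip' (by rw [NN_mul, NN_NN, NN_NN]; try ring) (by rw [NN_mul, NN_NN, NN_NN]; try ring)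
    _ = cs (B * A) (B * A) := diag_dag B A
    _ = cs (A * B) (A * B) := cs_congr (by ring) (by ring)

lemma cs_expand9 (x y z x' y' z' : Polynomial ℂ) :
    cs (x+y+z) (x'+y'+z') = cs x x' + cs x y' + cs x z' + cs y x' + cs y y' + cs y z'
      + cs z x' + cs z y' + cs z z' := by
  simp only [cs_add_left, cs_add_right]
  ring

-- the (s4) cross cancellation
lemma claimX (A B : Polynomial ℂ) (d : ℕ) (hA : A.natDegree = d) (hB : B.natDegree = d)
    (s : ℝ) :
    cs (A * NN A)
        (C (s:ℂ) * (X^(d+1) * (C ((-1:ℂ)^(d+1)) * (B * dagger B) + NN (dagger B) * NN B)))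
      + cs (C (s:ℂ) * (X^(d+1) * (C ((-1:ℂ)^(d+1)) * (B * dagger B) + NN (dagger B) * NN B)))
        (C ((-1:ℂ)^(d+1)) * (X^(2*d+2) * (NN (dagger A) * dagger A))) = 0 := by
  have hg : ((-1:ℂ))^(d+1) * ((-1:ℂ))^(d+1) = 1 := neg_one_pow_self_mul _
  have h1 : cs (A * NN A)
      (C (s:ℂ) * (X^(d+1) * (C ((-1:ℂ)^(d+1)) * (B * dagger B) + NN (dagger B) * NN B)))
      = (s:ℂ) * ((-1:ℂ)^(d+1) * cs (A * NN A) (X^(d+1) * (B * dagger B))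
          + cs (A * NN A) (X^(d+1) * (NN (dagger B) * NN B))) := by
    rw [cs_C_mul_right, Complex.conj_ofReal]
    congr 1
    rw [cs_congr rfl (show X^(d+1) * (C ((-1:ℂ)^(d+1)) * (B * dagger B) + NN (dagger B) * NN B)
        = C ((-1:ℂ)^(d+1)) * (X^(d+1) * (B * dagger B)) + X^(d+1) * (NN (dagger B) * NN B) by ring),
      cs_add_right, cs_C_mul_right, conj_neg_one_pow]
  have h2 : cs (C (s:ℂ) * (X^(d+1) * (C ((-1:ℂ)^(d+1)) * (B * dagger B) + NN (dagger B) * NN B)))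
        (C ((-1:ℂ)^(d+1)) * (X^(2*d+2) * (NN (dagger A) * dagger A)))
      = (s:ℂ) * ((-1:ℂ)^(d+1) *
          (((-1:ℂ)^(d+1) * cs (B * dagger B) (X^(d+1) * (NN (dagger A) * dagger A))
            + cs (NN (dagger B) * NN B) (X^(d+1) * (NN (dagger A) * dagger A))))) := by
    rw [cs_C_mul_left, cs_C_mul_right, conj_neg_one_pow]
    congr 2
    rw [cs_congr (show X^(d+1) * (C ((-1:ℂ)^(d+1)) * (B * dagger B) + NN (dagger B) * NN B)
        = C ((-1:ℂ)^(d+1)) * (X^(d+1) * (B * dagger B)) + X^(d+1) * (NN (dagger B) * NN B) by ring)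
        (show X^(2*d+2) * (NN (dagger A) * dagger A)
        = X^(d+1) * (X^(d+1) * (NN (dagger A) * dagger A)) by ring),
      cs_add_left, cs_C_mul_left, cs_shift, cs_shift]
  rw [h1, h2, hk2 A B d hA hB, hk3 A B d hA hB, hk4 A B d hA hB, hk3 A B d hA hB,
      neg_one_pow_succ]
  have hh : ((-1:ℂ))^d * (-1:ℂ)^d = 1 := neg_one_pow_self_mul d
  linear_combination (2*(s:ℂ)*(-1:ℂ)^d*cs (A * NN A) (X^(d+1) * (B * dagger B))) * hh

lemma hss' {s : ℝ} (hs : s = 1 ∨ s = -1) : (C (s:ℂ)) * C (s:ℂ) = 1 := by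
  rw [← map_mul]; rcases hs with h | h <;> rw [h] <;> norm_num

lemma step_n2 (F : Polynomial ℂ) (d : ℕ) (hF : F.natDegree = d) (s : ℝ) (hs : s = 1 ∨ s = -1) :
    cs (F + C (s:ℂ) * (X^(d+1) * NN (dagger F))) (F + C (s:ℂ) * (X^(d+1) * NN (dagger F)))
      = 2 * cs F F := by
  have hd : F.natDegree < d + 1 := by omega
  have h1 : cs F (C (s:ℂ) * (X^(d+1) * NN (dagger F))) = 0 := by
    rw [cs_C_mul_right, cs_zero_right hd, mul_zero]
  have h2 : cs (C (s:ℂ) * (X^(d+1) * NN (dagger F))) F = 0 := by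
    rw [cs_conj, h1, map_zero]
  have h3 : cs (C (s:ℂ) * (X^(d+1) * NN (dagger F))) (C (s:ℂ) * (X^(d+1) * NN (dagger F)))
      = cs F F := by
    rw [cs_C_mul_left, cs_C_mul_right, Complex.conj_ofReal, cs_shift, cs_NN]
    rw [show dagger F = 1 * dagger F by ring, diag_dag, ← mul_assoc]
    have : (s:ℂ) * (s:ℂ) = 1 := by rcases hs with h | h <;> rw [h] <;> norm_num
    rw [this, one_mul]
    exact cs_congr (by ring) (by ring)
  rw [cs_add_left, cs_add_right, cs_add_right, h1, h2, h3]
  ring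

lemma step_uu (F G : Polynomial ℂ) (d : ℕ) (hF : F.natDegree = d) (hG : G.natDegree = d)
    (s : ℝ) (hs : s = 1 ∨ s = -1) :
    cs ((F + C (s:ℂ) * (X^(d+1) * NN (dagger F))) * (G + C (s:ℂ) * (X^(d+1) * NN (dagger G))))
       ((F + C (s:ℂ) * (X^(d+1) * NN (dagger F))) * (G + C (s:ℂ) * (X^(d+1) * NN (dagger G))))
      = 2 * cs (F*G) (F*G) + 2 * cs (F * NN G) (F * NN G)
        + (cs (F * NN F) (G * NN G) + conj (cs (F * NN F) (G * NN G))) := by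
  have hxyz : (F + C (s:ℂ) * (X^(d+1) * NN (dagger F))) * (G + C (s:ℂ) * (X^(d+1) * NN (dagger G)))
      = F*G + C (s:ℂ) * (X^(d+1) * (F * NN (dagger G) + G * NN (dagger F)))
        + X^(2*d+2) * (NN (dagger F) * NN (dagger G)) := by
    calc (F + C (s:ℂ) * (X^(d+1) * NN (dagger F))) * (G + C (s:ℂ) * (X^(d+1) * NN (dagger G)))
        = F*G + C (s:ℂ) * (X^(d+1) * (F * NN (dagger G) + G * NN (dagger F)))
          + (C (s:ℂ) * C (s:ℂ)) * (X^(2*d+2) * (NN (dagger F) * NN (dagger G))) := by ring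
      _ = _ := by rw [hss' hs, one_mul]
  rw [hxyz, cs_expand9]
  have hdeg : (F*G).natDegree < 2*d+2 := by
    have := Polynomial.natDegree_mul_le (p := F) (q := G); omega
  have txz : cs (F*G) (X^(2*d+2) * (NN (dagger F) * NN (dagger G))) = 0 := cs_zero_right hdeg _
  have tzx : cs (X^(2*d+2) * (NN (dagger F) * NN (dagger G))) (F*G) = 0 := cs_zero_left hdeg _
  have txy : cs (F*G) (C (s:ℂ) * (X^(d+1) * (F * NN (dagger G) + G * NN (dagger F))))
      + cs (C (s:ℂ) * (X^(d+1) * (F * NN (dagger G) + G * NN (dagger F))))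
          (X^(2*d+2) * (NN (dagger F) * NN (dagger G))) = 0 := by
    rw [cs_C_mul_right, Complex.conj_ofReal, cs_C_mul_left,
        cs_congr rfl (show X^(d+1) * (F * NN (dagger G) + G * NN (dagger F))
          = X^(d+1) * (F * NN (dagger G)) + X^(d+1) * (G * NN (dagger F)) by ring),
        cs_add_right,
        cs_congr (show X^(d+1) * (F * NN (dagger G) + G * NN (dagger F))
          = X^(d+1) * (F * NN (dagger G)) + X^(d+1) * (G * NN (dagger F)) by ring)
          (show X^(2*d+2) * (NN (dagger F) * NN (dagger G))
          = X^(d+1) * (X^(d+1) * (NN (dagger F) * NN (dagger G))) by ring),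
        cs_add_left, cs_shift, cs_shift]
    have c1 := cancel_u F G d hF hG
    have c2 := cancel_u G F d hG hF
    have c2' : cs (F*G) (X^(d+1) * (F * NN (dagger G)))
        + cs (G * NN (dagger F)) (X^(d+1) * (NN (dagger F) * NN (dagger G))) = 0 := by
      rw [cs_congr (show F*G = G*F by ring) rfl,
          cs_congr rfl (show X^(d+1) * (NN (dagger F) * NN (dagger G))
            = X^(d+1) * (NN (dagger G) * NN (dagger F)) by ring)]
      exact c2
    linear_combination (s:ℂ) * c1 + (s:ℂ) * c2'
  have tyx : cs (C (s:ℂ) * (X^(d+1) * (F * NN (dagger G) + G * NN (dagger F)))) (F*G)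
      + cs (X^(2*d+2) * (NN (dagger F) * NN (dagger G)))
          (C (s:ℂ) * (X^(d+1) * (F * NN (dagger G) + G * NN (dagger F)))) = 0 := by
    rw [cs_conj, cs_conj (X^(2*d+2) * (NN (dagger F) * NN (dagger G))), ← map_add, txy, map_zero]
  have tyy : cs (C (s:ℂ) * (X^(d+1) * (F * NN (dagger G) + G * NN (dagger F))))
        (C (s:ℂ) * (X^(d+1) * (F * NN (dagger G) + G * NN (dagger F))))
      = 2 * cs (F * NN G) (F * NN G)
        + (cs (F * NN F) (G * NN G) + conj (cs (F * NN F) (G * NN G))) := by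
    rw [cs_C_mul_left, cs_C_mul_right, Complex.conj_ofReal, ← mul_assoc]
    have hs1 : (s:ℂ) * (s:ℂ) = 1 := by rcases hs with h | h <;> rw [h] <;> norm_num
    rw [hs1, one_mul, cs_shift, cs_add_left, cs_add_right, cs_add_right]
    rw [diag1 F G, show cs (G * NN (dagger F)) (G * NN (dagger F))
        = cs (F * NN G) (F * NN G) by rw [diag1 G F]; exact veq F G]
    rw [crossW F G d hF hG, cs_conj (G * NN (dagger F)) (F * NN (dagger G)), crossW F G d hF hG]
    ring
  have tzz : cs (X^(2*d+2) * (NN (dagger F) * NN (dagger G)))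
        (X^(2*d+2) * (NN (dagger F) * NN (dagger G))) = cs (F*G) (F*G) := by
    rw [cs_shift]; exact diag3 F G
  rw [txz, tzx, tyy, tzz]
  linear_combination txy + tyx

lemma NN_natDegree_le (p : Polynomial ℂ) : (NN p).natDegree ≤ p.natDegree := by
  apply Polynomial.natDegree_le_iff_coeff_eq_zero.2
  intro k hk
  rw [NN_coeff, Polynomial.coeff_eq_zero_of_natDegree_lt hk, mul_zero]

lemma step_vv (F G : Polynomial ℂ) (d : ℕ) (hF : F.natDegree = d) (hG : G.natDegree = d)
    (s : ℝ) (hs : s = 1 ∨ s = -1) :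
    cs ((F + C (s:ℂ) * (X^(d+1) * NN (dagger F))) * NN (G + C (s:ℂ) * (X^(d+1) * NN (dagger G))))
       ((F + C (s:ℂ) * (X^(d+1) * NN (dagger F))) * NN (G + C (s:ℂ) * (X^(d+1) * NN (dagger G))))
      = 2 * cs (F*G) (F*G) + 2 * cs (F * NN G) (F * NN G)
        - (cs (F * NN F) (G * NN G) + conj (cs (F * NN F) (G * NN G))) := by
  have hg : ((-1:ℂ))^(d+1) * ((-1:ℂ))^(d+1) = 1 := neg_one_pow_self_mul _
  have hh : ((-1:ℂ))^d * ((-1:ℂ))^d = 1 := neg_one_pow_self_mul _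
  have hs1 : (s:ℂ) * (s:ℂ) = 1 := by rcases hs with h | h <;> rw [h] <;> norm_num
  have hNG' : NN (G + C (s:ℂ) * (X^(d+1) * NN (dagger G)))
      = NN G + C (s:ℂ) * (C ((-1:ℂ)^(d+1)) * (X^(d+1) * dagger G)) := by
    rw [NN_add, NN_C_mul, NN_mul, NN_X_pow, NN_NN]; try ring
  have hxyz : (F + C (s:ℂ) * (X^(d+1) * NN (dagger F)))
        * NN (G + C (s:ℂ) * (X^(d+1) * NN (dagger G)))
      = F * NN G
        + C (s:ℂ) * (X^(d+1) * (C ((-1:ℂ)^(d+1)) * (F * dagger G) + NN (dagger F) * NN G))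
        + C ((-1:ℂ)^(d+1)) * (X^(2*d+2) * (NN (dagger F) * dagger G)) := by
    rw [hNG']
    calc (F + C (s:ℂ) * (X^(d+1) * NN (dagger F)))
          * (NN G + C (s:ℂ) * (C ((-1:ℂ)^(d+1)) * (X^(d+1) * dagger G)))
        = F * NN G
          + C (s:ℂ) * (X^(d+1) * (C ((-1:ℂ)^(d+1)) * (F * dagger G) + NN (dagger F) * NN G))
          + (C (s:ℂ) * C (s:ℂ)) * (C ((-1:ℂ)^(d+1)) * (X^(2*d+2) * (NN (dagger F) * dagger G))) := by
          ring
      _ = _ := by rw [hss' hs, one_mul]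
  rw [hxyz, cs_expand9]
  have hdeg : (F * NN G).natDegree < 2*d+2 := by
    have h1 := Polynomial.natDegree_mul_le (p := F) (q := NN G)
    have h2 := NN_natDegree_le G
    omega
  have txz : cs (F * NN G) (C ((-1:ℂ)^(d+1)) * (X^(2*d+2) * (NN (dagger F) * dagger G))) = 0 := by
    rw [cs_C_mul_right, cs_zero_right hdeg, mul_zero]
  have tzx : cs (C ((-1:ℂ)^(d+1)) * (X^(2*d+2) * (NN (dagger F) * dagger G))) (F * NN G) = 0 := by
    rw [cs_C_mul_left, cs_zero_left hdeg, mul_zero]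
  have txy : cs (F * NN G)
        (C (s:ℂ) * (X^(d+1) * (C ((-1:ℂ)^(d+1)) * (F * dagger G) + NN (dagger F) * NN G)))
      + cs (C (s:ℂ) * (X^(d+1) * (C ((-1:ℂ)^(d+1)) * (F * dagger G) + NN (dagger F) * NN G)))
          (C ((-1:ℂ)^(d+1)) * (X^(2*d+2) * (NN (dagger F) * dagger G))) = 0 := by
    rw [cs_C_mul_right, Complex.conj_ofReal, cs_C_mul_left, cs_C_mul_right, conj_neg_one_pow,
        cs_congr rfl (show X^(d+1) * (C ((-1:ℂ)^(d+1)) * (F * dagger G) + NN (dagger F) * NN G)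
          = C ((-1:ℂ)^(d+1)) * (X^(d+1) * (F * dagger G)) + X^(d+1) * (NN (dagger F) * NN G) by
            ring),
        cs_add_right, cs_C_mul_right, conj_neg_one_pow,
        cs_congr (show X^(d+1) * (C ((-1:ℂ)^(d+1)) * (F * dagger G) + NN (dagger F) * NN G)
          = C ((-1:ℂ)^(d+1)) * (X^(d+1) * (F * dagger G)) + X^(d+1) * (NN (dagger F) * NN G) by
            ring)
          (show X^(2*d+2) * (NN (dagger F) * dagger G)
          = X^(d+1) * (X^(d+1) * (NN (dagger F) * dagger G)) by ring),
        cs_add_left, cs_C_mul_left, cs_shift, cs_shift]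
    have cv1 := cancel_v1 F G d hF hG
    have cv2 := cancel_v2 F G d hF hG
    linear_combination (s:ℂ) * cv1 + (s:ℂ) * ((-1:ℂ)^(d+1)) * cv2
      + ((s:ℂ) * cs (F * dagger G) (X^(d+1) * (NN (dagger F) * dagger G))) * hg
  have tyx : cs (C (s:ℂ) * (X^(d+1) * (C ((-1:ℂ)^(d+1)) * (F * dagger G) + NN (dagger F) * NN G)))
        (F * NN G)
      + cs (C ((-1:ℂ)^(d+1)) * (X^(2*d+2) * (NN (dagger F) * dagger G)))
          (C (s:ℂ) * (X^(d+1) * (C ((-1:ℂ)^(d+1)) * (F * dagger G) + NN (dagger F) * NN G))) = 0 := by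
    rw [cs_conj, cs_conj (C ((-1:ℂ)^(d+1)) * (X^(2*d+2) * (NN (dagger F) * dagger G))),
        ← map_add, txy, map_zero]
  have tyy : cs (C (s:ℂ) * (X^(d+1) * (C ((-1:ℂ)^(d+1)) * (F * dagger G) + NN (dagger F) * NN G)))
        (C (s:ℂ) * (X^(d+1) * (C ((-1:ℂ)^(d+1)) * (F * dagger G) + NN (dagger F) * NN G)))
      = 2 * cs (F*G) (F*G)
        - (cs (F * NN F) (G * NN G) + conj (cs (F * NN F) (G * NN G))) := by
    rw [cs_C_mul_left, cs_C_mul_right, Complex.conj_ofReal, ← mul_assoc, hs1, one_mul, cs_shift,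
        cs_add_left, cs_add_right, cs_add_right, cs_C_mul_left, cs_C_mul_right, conj_neg_one_pow,
        cs_C_mul_left, cs_C_mul_right, conj_neg_one_pow]
    rw [diag_dag F G, diag4 F G, crossc1 F G d hF hG,
        cs_conj (NN (dagger F) * NN G) (F * dagger G), crossc1 F G d hF hG]
    rw [map_mul, conj_neg_one_pow, neg_one_pow_succ]
    linear_combination (cs (F*G) (F*G) - cs (F * NN F) (G * NN G)
      - conj (cs (F * NN F) (G * NN G))) * hh
  have tzz : cs (C ((-1:ℂ)^(d+1)) * (X^(2*d+2) * (NN (dagger F) * dagger G)))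
        (C ((-1:ℂ)^(d+1)) * (X^(2*d+2) * (NN (dagger F) * dagger G)))
      = cs (F * NN G) (F * NN G) := by
    rw [cs_C_mul_left, cs_C_mul_right, conj_neg_one_pow, ← mul_assoc, hg, one_mul, cs_shift]
    exact diag2 F G
  rw [txz, tzx, tyy, tzz]
  linear_combination txy + tyx

lemma cs_conj' (a b : Polynomial ℂ) : conj (cs a b) = cs b a := by
  rw [cs_conj a b, Complex.conj_conj]

lemma decomp1 (F G : Polynomial ℂ) (d : ℕ) (s : ℝ) (hs : s = 1 ∨ s = -1) :
    (F + C (s:ℂ) * (X^(d+1) * NN (dagger F))) * NN (G + C (s:ℂ) * (X^(d+1) * NN (dagger G)))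
      = F * NN G
        + C (s:ℂ) * (X^(d+1) * (C ((-1:ℂ)^(d+1)) * (F * dagger G) + NN (dagger F) * NN G))
        + C ((-1:ℂ)^(d+1)) * (X^(2*d+2) * (NN (dagger F) * dagger G)) := by
  have hNG' : NN (G + C (s:ℂ) * (X^(d+1) * NN (dagger G)))
      = NN G + C (s:ℂ) * (C ((-1:ℂ)^(d+1)) * (X^(d+1) * dagger G)) := by
    rw [NN_add, NN_C_mul, NN_mul, NN_X_pow, NN_NN]; try ring
  rw [hNG']
  calc (F + C (s:ℂ) * (X^(d+1) * NN (dagger F)))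
        * (NN G + C (s:ℂ) * (C ((-1:ℂ)^(d+1)) * (X^(d+1) * dagger G)))
      = F * NN G
        + C (s:ℂ) * (X^(d+1) * (C ((-1:ℂ)^(d+1)) * (F * dagger G) + NN (dagger F) * NN G))
        + (C (s:ℂ) * C (s:ℂ)) * (C ((-1:ℂ)^(d+1)) * (X^(2*d+2) * (NN (dagger F) * dagger G))) := by
        ring
    _ = _ := by rw [hss' hs, one_mul]

lemma step_ww (F G : Polynomial ℂ) (d : ℕ) (hF : F.natDegree = d) (hG : G.natDegree = d)
    (s : ℝ) (hs : s = 1 ∨ s = -1) :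
    cs ((F + C (s:ℂ) * (X^(d+1) * NN (dagger F))) * NN (F + C (s:ℂ) * (X^(d+1) * NN (dagger F))))
       ((G + C (s:ℂ) * (X^(d+1) * NN (dagger G))) * NN (G + C (s:ℂ) * (X^(d+1) * NN (dagger G))))
      + conj (cs
        ((F + C (s:ℂ) * (X^(d+1) * NN (dagger F))) * NN (F + C (s:ℂ) * (X^(d+1) * NN (dagger F))))
        ((G + C (s:ℂ) * (X^(d+1) * NN (dagger G))) * NN (G + C (s:ℂ) * (X^(d+1) * NN (dagger G)))))
      = 4 * cs (F*G) (F*G) - 4 * cs (F * NN G) (F * NN G)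
        + 2 * (cs (F * NN F) (G * NN G) + conj (cs (F * NN F) (G * NN G))) := by
  have hg : ((-1:ℂ))^(d+1) * ((-1:ℂ))^(d+1) = 1 := neg_one_pow_self_mul _
  have hh : ((-1:ℂ))^d * ((-1:ℂ))^d = 1 := neg_one_pow_self_mul _
  have hs1 : (s:ℂ) * (s:ℂ) = 1 := by rcases hs with h | h <;> rw [h] <;> norm_num
  rw [decomp1 F F d s hs, decomp1 G G d s hs, cs_expand9]
  have hdegF : (F * NN F).natDegree < 2*d+2 := by
    have h1 := Polynomial.natDegree_mul_le (p := F) (q := NN F)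
    have h2 := NN_natDegree_le F
    omega
  have hdegG : (G * NN G).natDegree < 2*d+2 := by
    have h1 := Polynomial.natDegree_mul_le (p := G) (q := NN G)
    have h2 := NN_natDegree_le G
    omega
  have txz : cs (F * NN F) (C ((-1:ℂ)^(d+1)) * (X^(2*d+2) * (NN (dagger G) * dagger G))) = 0 := by
    rw [cs_C_mul_right, cs_zero_right hdegF, mul_zero]
  have tzx : cs (C ((-1:ℂ)^(d+1)) * (X^(2*d+2) * (NN (dagger F) * dagger F))) (G * NN G) = 0 := by
    rw [cs_C_mul_left, cs_zero_left hdegG, mul_zero]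
  have tyy : cs (C (s:ℂ) * (X^(d+1) * (C ((-1:ℂ)^(d+1)) * (F * dagger F) + NN (dagger F) * NN F)))
        (C (s:ℂ) * (X^(d+1) * (C ((-1:ℂ)^(d+1)) * (G * dagger G) + NN (dagger G) * NN G)))
      = 2 * cs (F*G) (F*G) - 2 * cs (F * NN G) (F * NN G) := by
    rw [cs_C_mul_left, cs_C_mul_right, Complex.conj_ofReal, ← mul_assoc, hs1, one_mul, cs_shift,
        cs_add_left, cs_add_right, cs_add_right, cs_C_mul_left, cs_C_mul_right, conj_neg_one_pow,
        cs_C_mul_left, cs_C_mul_right, conj_neg_one_pow]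
    rw [diag_aa F G d hF hG, diag_bb F G d hF hG, crossc2 F G d hF hG,
        cs_conj (NN (dagger F) * NN F) (G * dagger G), crossc2 G F d hG hF,
        map_mul, conj_neg_one_pow, cs_self_conj, veq F G, neg_one_pow_succ]
    linear_combination (cs (F*G) (F*G) - 2 * cs (F * NN G) (F * NN G)) * hh
  have tzz : cs (C ((-1:ℂ)^(d+1)) * (X^(2*d+2) * (NN (dagger F) * dagger F)))
        (C ((-1:ℂ)^(d+1)) * (X^(2*d+2) * (NN (dagger G) * dagger G)))
      = conj (cs (F * NN F) (G * NN G)) := by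
    rw [cs_C_mul_left, cs_C_mul_right, conj_neg_one_pow, ← mul_assoc, hg, one_mul, cs_shift]
    exact zzW F G d hF hG
  have h1 := claimX F G d hF hG s
  have h2 := claimX G F d hG hF s
  have h1c := congrArg conj h1
  have h2c := congrArg conj h2
  simp only [map_add, cs_conj', map_zero] at h1c h2c
  rw [txz, tzx, tyy, tzz]
  simp only [map_add, map_sub, map_mul, map_ofNat, map_zero, cs_conj', Complex.conj_conj]
  linear_combination h1 + h2 + h1c + h2c

lemma continuous_circ : Continuous circ :=
  Complex.continuous_exp.comp (Complex.continuous_ofReal.mul continuous_const)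

lemma integral_circ_pow (j k : ℕ) :
    ∫ θ in (0:ℝ)..(2*Real.pi), (circ θ)^j * conj ((circ θ)^k)
      = if j = k then ((2*Real.pi : ℝ) : ℂ) else 0 := by
  have h1 : ∀ θ:ℝ, (circ θ)^j * conj ((circ θ)^k)
      = Complex.exp ((((j:ℂ) - k) * Complex.I) * θ) := by
    intro θ
    rw [circ, ← Complex.exp_nat_mul, ← Complex.exp_nat_mul, ← Complex.exp_conj,
        ← Complex.exp_add]
    congr 1
    simp only [map_mul, Complex.conj_ofReal, Complex.conj_I, Complex.conj_natCast]
    ring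
  rw [intervalIntegral.integral_congr (fun θ _ => h1 θ)]
  by_cases h : j = k
  · subst h
    simp only [sub_self, zero_mul, Complex.exp_zero]
    rw [intervalIntegral.integral_const]
    simp [sub_zero]
  · rw [if_neg h]
    have hc : ((j:ℂ) - k) * Complex.I ≠ 0 := by
      simp only [ne_eq, mul_eq_zero, Complex.I_ne_zero, or_false, sub_eq_zero]
      exact_mod_cast fun hh => h (by exact_mod_cast hh)
    rw [integral_exp_mul_complex hc]
    have : Complex.exp ((((j:ℂ) - k) * Complex.I) * (2*Real.pi : ℝ))
        = 1 := by
      have := Complex.exp_int_mul_two_pi_mul_I ((j:ℤ) - k)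
      rw [← this]
      congr 1
      push_cast
      ring
    rw [this]
    simp

lemma parseval_aux (p q : Polynomial ℂ) :
    (∫ θ in (0:ℝ)..(2*Real.pi), (p.eval (circ θ) * conj (q.eval (circ θ))))
      = ((2*Real.pi : ℝ) : ℂ)
        * ∑ i ∈ Finset.range (max p.natDegree q.natDegree + 1), p.coeff i * conj (q.coeff i) := by
  set N := max p.natDegree q.natDegree + 1 with hN
  have hp : p.natDegree < N := by omega
  have hq : q.natDegree < N := by omega
  have hev : ∀ θ:ℝ, p.eval (circ θ) * conj (q.eval (circ θ))
      = ∑ j ∈ Finset.range N, ∑ k ∈ Finset.range N,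
          (p.coeff j * conj (q.coeff k)) * ((circ θ)^j * conj ((circ θ)^k)) := by
    intro θ
    rw [Polynomial.eval_eq_sum_range' hp, Polynomial.eval_eq_sum_range' hq, map_sum,
        Finset.sum_mul_sum]
    apply Finset.sum_congr rfl; intro j _
    apply Finset.sum_congr rfl; intro k _
    rw [map_mul]
    ring
  rw [intervalIntegral.integral_congr (fun θ _ => hev θ)]
  have hint : ∀ j k : ℕ, IntervalIntegrable
      (fun θ => (p.coeff j * conj (q.coeff k)) * ((circ θ)^j * conj ((circ θ)^k)))
      MeasureTheory.volume 0 (2*Real.pi) := by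
    intro j k
    apply Continuous.intervalIntegrable
    exact continuous_const.mul ((continuous_circ.pow j).mul
      (Complex.continuous_conj.comp (continuous_circ.pow k)))
  have hout : ∀ j ∈ Finset.range N, IntervalIntegrable
      (fun θ => ∑ k ∈ Finset.range N,
        (p.coeff j * conj (q.coeff k)) * ((circ θ)^j * conj ((circ θ)^k)))
      MeasureTheory.volume 0 (2*Real.pi) := by
    intro j _
    apply Continuous.intervalIntegrable
    apply continuous_finset_sum
    intro k _
    exact continuous_const.mul ((continuous_circ.pow j).mul
      (Complex.continuous_conj.comp (continuous_circ.pow k)))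
  rw [intervalIntegral.integral_finset_sum hout]
  have hinner : ∀ j, (∫ θ in (0:ℝ)..(2*Real.pi),
      ∑ k ∈ Finset.range N, (p.coeff j * conj (q.coeff k)) * ((circ θ)^j * conj ((circ θ)^k)))
      = ((2*Real.pi:ℝ):ℂ) * (if j ∈ Finset.range N then p.coeff j * conj (q.coeff j) else 0) := by
    intro j
    rw [intervalIntegral.integral_finset_sum (fun k _ => hint j k)]
    have hterm : ∀ k ∈ Finset.range N,
        (∫ θ in (0:ℝ)..(2*Real.pi),
          (p.coeff j * conj (q.coeff k)) * ((circ θ)^j * conj ((circ θ)^k)))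
        = if j = k then ((2*Real.pi:ℝ):ℂ) * (p.coeff j * conj (q.coeff k)) else 0 := by
      intro k _
      rw [intervalIntegral.integral_const_mul, integral_circ_pow]
      by_cases h : j = k <;> simp [h] <;> ring
    rw [Finset.sum_congr rfl hterm, Finset.sum_ite_eq]
    by_cases hj : j ∈ Finset.range N <;> simp [hj]
  rw [Finset.sum_congr rfl (fun j _ => hinner j), ← Finset.mul_sum]
  congr 1
  apply Finset.sum_congr rfl
  intro j hj
  rw [if_pos hj]

lemma parseval (p q : Polynomial ℂ) :
    (∫ θ in (0:ℝ)..(2*Real.pi), (p.eval (circ θ) * conj (q.eval (circ θ))))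
      = ((2*Real.pi : ℝ) : ℂ) * cs p q := by
  rw [parseval_aux, cs_eq_sum q (by omega : p.natDegree < max p.natDegree q.natDegree + 1)]

lemma continuous_ev (p : Polynomial ℂ) : Continuous (fun θ => p.eval (circ θ)) :=
  p.continuous.comp continuous_circ

lemma integral_re_eq (p q : Polynomial ℂ) :
    (∫ θ in (0:ℝ)..(2*Real.pi), (p.eval (circ θ) * conj (q.eval (circ θ))).re)
      = (2*Real.pi) * (cs p q).re := by
  have hint : IntervalIntegrable (fun θ => p.eval (circ θ) * conj (q.eval (circ θ)))
      MeasureTheory.volume 0 (2*Real.pi) :=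
    Continuous.intervalIntegrable (by
      exact (continuous_ev p).mul (Complex.continuous_conj.comp (continuous_ev q))) _ _
  have := Complex.reCLM.intervalIntegral_comp_comm hint
  rw [show (fun θ => (p.eval (circ θ) * conj (q.eval (circ θ))).re)
      = (fun θ => Complex.reCLM (p.eval (circ θ) * conj (q.eval (circ θ)))) from rfl, this,
    parseval]
  simp

lemma quad_int (p : Polynomial ℂ) :
    (1/(2*Real.pi)) * (∫ θ in (0:ℝ)..(2*Real.pi), ‖p.eval (circ θ)‖^2) = (cs p p).re := by
  have hpt : ∀ θ:ℝ, (‖p.eval (circ θ)‖^2 : ℝ)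
      = (p.eval (circ θ) * conj (p.eval (circ θ))).re := by
    intro θ
    rw [Complex.mul_conj]
    simp [Complex.normSq_eq_norm_sq, ← Complex.ofReal_pow]
  rw [intervalIntegral.integral_congr (fun θ _ => hpt θ), integral_re_eq]
  have hpi : Real.pi ≠ 0 := Real.pi_ne_zero
  field_simp

lemma n2_eq (f : Polynomial ℂ) : n2 f = (cs f f).re := quad_int f

lemma uu_eq (f g : Polynomial ℂ) : uu f g = (cs (f*g) (f*g)).re := by
  rw [uu, show (fun θ => (‖f.eval (circ θ) * g.eval (circ θ)‖^2 : ℝ))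
      = fun θ => ‖(f*g).eval (circ θ)‖^2 from funext fun θ => by rw [Polynomial.eval_mul]]
  exact quad_int (f*g)

lemma eval_neg_circ (g : Polynomial ℂ) (θ : ℝ) : g.eval (-(circ θ)) = (NN g).eval (circ θ) := by
  rw [NN, Polynomial.eval_comp]
  simp

lemma vv_eq (f g : Polynomial ℂ) : vv f g = (cs (f * NN g) (f * NN g)).re := by
  rw [vv, show (fun θ => (‖f.eval (circ θ) * g.eval (-(circ θ))‖^2 : ℝ))
      = fun θ => ‖(f * NN g).eval (circ θ)‖^2 from funext fun θ => by
        rw [Polynomial.eval_mul, eval_neg_circ]]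
  exact quad_int (f * NN g)

lemma ww_eq (f g : Polynomial ℂ) : ww f g = (cs (f * NN f) (g * NN g)).re := by
  rw [ww, show (fun θ => f.eval (circ θ) * f.eval (-(circ θ))
        * (starRingEnd ℂ) (g.eval (circ θ) * g.eval (-(circ θ))))
      = fun θ => ((f * NN f).eval (circ θ) * conj ((g * NN g).eval (circ θ))) from
        funext fun θ => by rw [Polynomial.eval_mul, Polynomial.eval_mul, eval_neg_circ f,
          eval_neg_circ g]]
  rw [parseval]
  have hpi : Real.pi ≠ 0 := Real.pi_ne_zero
  simp
  field_simp

lemma n2_pos (f : Polynomial ℂ) (h0 : f.coeff 0 ≠ 0) : 0 < (cs f f).re := by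
  rw [cs_eq_sum f (Nat.lt_succ_self _), Complex.re_sum]
  apply Finset.sum_pos'
  · intro k _
    rw [Complex.mul_conj]
    simp [Complex.normSq_nonneg]
  · refine ⟨0, Finset.mem_range.2 (by omega), ?_⟩
    rw [Complex.mul_conj]
    simpa using Complex.normSq_pos.2 h0

lemma natDegree_NN_dagger (F : Polynomial ℂ) (hF0 : F.coeff 0 ≠ 0) :
    (NN (dagger F)).natDegree = F.natDegree := by
  apply le_antisymm ((NN_natDegree_le _).trans (dagger_natDegree_le _))
  apply Polynomial.le_natDegree_of_ne_zero
  rw [NN_coeff, dagger_coeff, if_pos le_rfl, Nat.sub_self]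
  simp only [ne_eq, mul_eq_zero, not_or]
  exact ⟨pow_ne_zero _ (by norm_num), by simpa using hF0⟩

lemma NN_dagger_ne_zero (F : Polynomial ℂ) (hF0 : F.coeff 0 ≠ 0) : NN (dagger F) ≠ 0 := by
  intro h
  have : (NN (dagger F)).coeff F.natDegree ≠ 0 := by
    rw [NN_coeff, dagger_coeff, if_pos le_rfl, Nat.sub_self]
    simp only [ne_eq, mul_eq_zero, not_or]
    exact ⟨pow_ne_zero _ (by norm_num), by simpa using hF0⟩
  rw [h] at this
  simp at this

lemma step_natDegree (F : Polynomial ℂ) (d : ℕ) (hF : F.natDegree = d) (hF0 : F.coeff 0 ≠ 0)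
    (s : ℝ) (hs : s = 1 ∨ s = -1) :
    (F + C (s:ℂ) * (X^(d+1) * NN (dagger F))).natDegree = 2*d+1 := by
  have hs0 : (s:ℂ) ≠ 0 := by rcases hs with h|h <;> rw [h] <;> norm_num
  have hNd : (NN (dagger F)).natDegree = d := by rw [natDegree_NN_dagger F hF0, hF]
  have hne := NN_dagger_ne_zero F hF0
  have hT : (C (s:ℂ) * (X^(d+1) * NN (dagger F))).natDegree = 2*d+1 := by
    rw [Polynomial.natDegree_C_mul hs0,
        Polynomial.natDegree_mul (pow_ne_zero _ Polynomial.X_ne_zero) hne,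
        Polynomial.natDegree_X_pow, hNd]
    omega
  rw [Polynomial.natDegree_add_eq_right_of_natDegree_lt (by rw [hT, hF]; omega), hT]

lemma step_coeff0 (F : Polynomial ℂ) (d : ℕ) (s : ℝ) :
    (F + C (s:ℂ) * (X^(d+1) * NN (dagger F))).coeff 0 = F.coeff 0 := by
  rw [Polynomial.coeff_add, Polynomial.coeff_C_mul, mul_comm (X^(d+1)) (NN (dagger F)),
      Polynomial.coeff_mul_X_pow', if_neg (by omega)]
  simp

/-- Limiting crosscorrelation demerit factor of a pair of stems of
Rudin-Shapiro-like polynomials. -/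
theorem cdf_limit_formula (f g : ℕ → Polynomial ℂ) (σ : ℕ → ℝ)
    (hσ : ∀ n, σ n = 1 ∨ σ n = -1)
    (hne_f : f 0 ≠ 0) (hne_g : g 0 ≠ 0)
    (hf0 : (f 0).coeff 0 ≠ 0) (hg0 : (g 0).coeff 0 ≠ 0)
    (hlen : (f 0).natDegree = (g 0).natDegree)
    (hf : ∀ n, f (n + 1) = f n + Polynomial.C (σ n : ℂ) *
      (Polynomial.X ^ ((f n).natDegree + 1) * (dagger (f n)).comp (-Polynomial.X)))
    (hg : ∀ n, g (n + 1) = g n + Polynomial.C (σ n : ℂ) *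
      (Polynomial.X ^ ((g n).natDegree + 1) * (dagger (g n)).comp (-Polynomial.X))) :
    Filter.Tendsto (fun n => uu (f n) (g n) / (n2 (f n) * n2 (g n))) Filter.atTop
      (nhds ((2 * uu (f 0) (g 0) + vv (f 0) (g 0) + ww (f 0) (g 0)) /
        (3 * n2 (f 0) * n2 (g 0)))) := by
  -- invariants
  have inv : ∀ n, (f n).natDegree = (g n).natDegree ∧ (f n).coeff 0 ≠ 0 ∧ (g n).coeff 0 ≠ 0 := by
    intro n
    induction n with
    | zero => exact ⟨hlen, hf0, hg0⟩
    | succ n ih =>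
      obtain ⟨hd, h0f, h0g⟩ := ih
      have hfn : f (n+1) = f n
          + C ((σ n : ℝ):ℂ) * (X^((f n).natDegree + 1) * NN (dagger (f n))) := hf n
      have hgn : g (n+1) = g n
          + C ((σ n : ℝ):ℂ) * (X^((g n).natDegree + 1) * NN (dagger (g n))) := hg n
      refine ⟨?_, ?_, ?_⟩
      · rw [hfn, hgn, step_natDegree (f n) _ rfl h0f (σ n) (hσ n),
            step_natDegree (g n) _ rfl h0g (σ n) (hσ n), hd]
      · rw [hfn, step_coeff0]; exact h0f
      · rw [hgn, step_coeff0]; exact h0g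
  -- real sequences
  set u : ℕ → ℝ := fun n => (cs (f n * g n) (f n * g n)).re with hu
  set v : ℕ → ℝ := fun n => (cs (f n * NN (g n)) (f n * NN (g n))).re with hv
  set w : ℕ → ℝ := fun n => (cs (f n * NN (f n)) (g n * NN (g n))).re with hw
  set a : ℕ → ℝ := fun n => (cs (f n) (f n)).re with ha'
  set b : ℕ → ℝ := fun n => (cs (g n) (g n)).re with hb'
  -- step data
  have hfgn : ∀ n, f (n+1) = f n
        + C ((σ n : ℝ):ℂ) * (X^((f n).natDegree + 1) * NN (dagger (f n)))
      ∧ g (n+1) = g n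
        + C ((σ n : ℝ):ℂ) * (X^((f n).natDegree + 1) * NN (dagger (g n))) := by
    intro n
    refine ⟨hf n, ?_⟩
    have := hg n
    rw [(inv n).1.symm] at this
    exact this
  have hre : ∀ z : ℂ, (2 * z).re = 2 * z.re := by
    intro z; simp [Complex.mul_re]
  -- recurrences
  have ru : ∀ n, u (n+1) = 2*u n + 2*v n + 2*w n := by
    intro n
    have e : cs (f (n+1) * g (n+1)) (f (n+1) * g (n+1))
        = 2 * cs (f n * g n) (f n * g n) + 2 * cs (f n * NN (g n)) (f n * NN (g n))
          + (cs (f n * NN (f n)) (g n * NN (g n))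
            + conj (cs (f n * NN (f n)) (g n * NN (g n)))) := by
      rw [(hfgn n).1, (hfgn n).2]
      exact step_uu (f n) (g n) _ rfl (inv n).1.symm (σ n) (hσ n)
    have := congrArg Complex.re e
    simp only [Complex.add_re, hre, Complex.conj_re] at this
    rw [hu, hv, hw]
    dsimp only
    rw [this]
    ring
  have rv : ∀ n, v (n+1) = 2*u n + 2*v n - 2*w n := by
    intro n
    have e : cs (f (n+1) * NN (g (n+1))) (f (n+1) * NN (g (n+1)))
        = 2 * cs (f n * g n) (f n * g n) + 2 * cs (f n * NN (g n)) (f n * NN (g n))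
          - (cs (f n * NN (f n)) (g n * NN (g n))
            + conj (cs (f n * NN (f n)) (g n * NN (g n)))) := by
      rw [(hfgn n).1, (hfgn n).2]
      exact step_vv (f n) (g n) _ rfl (inv n).1.symm (σ n) (hσ n)
    have := congrArg Complex.re e
    simp only [Complex.add_re, Complex.sub_re, hre, Complex.conj_re] at this
    rw [hu, hv, hw]
    dsimp only
    rw [this]
    ring
  have rw' : ∀ n, w (n+1) = 2*u n - 2*v n + 2*w n := by
    intro n
    have e : cs (f (n+1) * NN (f (n+1))) (g (n+1) * NN (g (n+1)))
        + conj (cs (f (n+1) * NN (f (n+1))) (g (n+1) * NN (g (n+1))))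
        = 4 * cs (f n * g n) (f n * g n) - 4 * cs (f n * NN (g n)) (f n * NN (g n))
          + 2 * (cs (f n * NN (f n)) (g n * NN (g n))
            + conj (cs (f n * NN (f n)) (g n * NN (g n)))) := by
      rw [(hfgn n).1, (hfgn n).2]
      exact step_ww (f n) (g n) _ rfl (inv n).1.symm (σ n) (hσ n)
    have := congrArg Complex.re e
    have h4 : ∀ z : ℂ, (4 * z).re = 4 * z.re := by
      intro z; simp [Complex.mul_re]
    simp only [Complex.add_re, Complex.sub_re, hre, h4, Complex.conj_re] at this
    rw [hu, hv, hw]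
    dsimp only
    linarith [this]
  have ra : ∀ n, a (n+1) = 2 * a n := by
    intro n
    have e : cs (f (n+1)) (f (n+1)) = 2 * cs (f n) (f n) := by
      rw [(hfgn n).1]
      exact step_n2 (f n) _ rfl (σ n) (hσ n)
    have := congrArg Complex.re e
    simp only [hre] at this
    rw [ha']
    dsimp only
    rw [this]
  have rb : ∀ n, b (n+1) = 2 * b n := by
    intro n
    have e : cs (g (n+1)) (g (n+1)) = 2 * cs (g n) (g n) := by
      rw [(hfgn n).2]
      exact step_n2 (g n) _ (inv n).1.symm (σ n) (hσ n)
    have := congrArg Complex.re e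
    simp only [hre] at this
    rw [hb']
    dsimp only
    rw [this]
  -- closed forms
  have forms : ∀ n,
      3 * u n = 4^n * (2*u 0+v 0+w 0) + (-2:ℝ)^n * (u 0-v 0-w 0)
      ∧ 3 * v n = 4^n * (u 0+2*v 0-w 0) - (-2:ℝ)^n * (u 0-v 0-w 0)
      ∧ 3 * w n = 4^n * (u 0-v 0+2*w 0) - (-2:ℝ)^n * (u 0-v 0-w 0) := by
    intro n
    induction n with
    | zero => refine ⟨by norm_num; ring, by norm_num; ring, by norm_num; ring⟩
    | succ n ih =>
      obtain ⟨h1, h2, h3⟩ := ih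
      refine ⟨?_, ?_, ?_⟩
      · rw [ru n]; linear_combination 2*h1 + 2*h2 + 2*h3
      · rw [rv n]; linear_combination 2*h1 + 2*h2 - 2*h3
      · rw [rw' n]; linear_combination 2*h1 - 2*h2 + 2*h3
  have han : ∀ n, a n = 2^n * a 0 := by
    intro n
    induction n with
    | zero => norm_num
    | succ n ih => rw [ra n, ih]; ring
  have hbn : ∀ n, b n = 2^n * b 0 := by
    intro n
    induction n with
    | zero => norm_num
    | succ n ih => rw [rb n, ih]; ring
  have ha0 : 0 < a 0 := n2_pos (f 0) hf0
  have hb0 : 0 < b 0 := n2_pos (g 0) hg0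
  -- the function in closed form
  have hfun : ∀ n, uu (f n) (g n) / (n2 (f n) * n2 (g n))
      = (2*u 0+v 0+w 0)/(3*(a 0 * b 0)) + (-1/2:ℝ)^n * ((u 0-v 0-w 0)/(3*(a 0*b 0))) := by
    intro n
    rw [uu_eq, n2_eq, n2_eq]
    have hL : (cs (f n * g n) (f n * g n)).re = u n := rfl
    have hA : (cs (f n) (f n)).re = a n := rfl
    have hB : (cs (g n) (g n)).re = b n := rfl
    rw [hL, hA, hB, han n, hbn n]
    obtain ⟨h1, _, _⟩ := forms n
    have hpow : ((-1:ℝ)/2)^n * 4^n = (-2:ℝ)^n := by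
      rw [← mul_pow]; norm_num
    have h2n : (2:ℝ)^n * 2^n = 4^n := by
      rw [← mul_pow]; norm_num
    have hden : (2:ℝ)^n * a 0 * ((2:ℝ)^n * b 0) ≠ 0 := by positivity
    have h4n : (4:ℝ)^n ≠ 0 := by positivity
    have hneg : (-2:ℝ)^n = (-1)^n * 2^n := by rw [neg_pow]
    rw [hneg] at h1
    have h4 : (4:ℝ)^n = 2^n * 2^n := by rw [← mul_pow]; norm_num
    rw [h4] at h1
    have hab : a 0 * b 0 ≠ 0 := (mul_pos ha0 hb0).ne'
    rw [div_pow, div_eq_iff hden]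
    have hun : u n = ((2^n*2^n)*(2*u 0+v 0+w 0) + ((-1)^n*2^n)*(u 0-v 0-w 0)) / 3 := by linarith
    rw [hun]
    field_simp
  -- limit
  have hT : Filter.Tendsto
      (fun n : ℕ => (2*u 0+v 0+w 0)/(3*(a 0 * b 0))
        + (-1/2:ℝ)^n * ((u 0-v 0-w 0)/(3*(a 0*b 0)))) Filter.atTop
      (nhds ((2*u 0+v 0+w 0)/(3*(a 0 * b 0)) + 0 * ((u 0-v 0-w 0)/(3*(a 0*b 0))))) := by
    apply Filter.Tendsto.add tendsto_const_nhds
    apply Filter.Tendsto.mul_const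
    exact tendsto_pow_atTop_nhds_zero_of_abs_lt_one (by rw [abs_of_nonpos] <;> norm_num)
  have hval : (2 * uu (f 0) (g 0) + vv (f 0) (g 0) + ww (f 0) (g 0)) /
      (3 * n2 (f 0) * n2 (g 0))
      = (2*u 0+v 0+w 0)/(3*(a 0 * b 0)) + 0 * ((u 0-v 0-w 0)/(3*(a 0*b 0))) := by
    rw [uu_eq, vv_eq, ww_eq, n2_eq, n2_eq]
    have : (3 : ℝ) * (cs (f 0) (f 0)).re * (cs (g 0) (g 0)).re
        = 3 * ((cs (f 0) (f 0)).re * (cs (g 0) (g 0)).re) := by ring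
    rw [this]
    ring
  rw [show (fun n => uu (f n) (g n) / (n2 (f n) * n2 (g n)))
      = fun n => (2*u 0+v 0+w 0)/(3*(a 0 * b 0))
        + (-1/2:ℝ)^n * ((u 0-v 0-w 0)/(3*(a 0*b 0))) from funext hfun, hval]
  exact hT
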